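/- Let H be a k-uniform hypergraph with m edges, no isolated vertices, and maximum degree Δ. Then λ_1(H) ≥ km/(km - Δ). -/

import Mathlib

open Finset

variable {n : ℕ}

def hdeg (E : Finset (Finset (Fin n))) (v : Fin n) : ℕ :=
  (E.filter fun e => v ∈ e).card

def codeg (E : Finset (Finset (Fin n))) (u v : Fin n) : ℕ :=
  (E.filter fun e => u ∈ e ∧ v ∈ e).card

noncomputable def adjMat (E : Finset (Finset (Fin n))) : Matrix (Fin n) (Fin n) ℝ :=
  fun u v => if u = v then 0
    else ∑ e ∈ E.filter (fun e => u ∈ e ∧ v ∈ e), (1 : ℝ) / ((e.card : ℝ) - 1)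

noncomputable def lapMat (E : Finset (Finset (Fin n))) : Matrix (Fin n) (Fin n) ℝ :=
  Matrix.diagonal (fun v => (hdeg E v : ℝ)) - adjMat E

noncomputable def normLap (E : Finset (Finset (Fin n))) : Matrix (Fin n) (Fin n) ℝ :=
  Matrix.diagonal (fun v => (hdeg E v : ℝ) ^ (-(1/2) : ℝ)) * lapMat E *
    Matrix.diagonal (fun v => (hdeg E v : ℝ) ^ (-(1/2) : ℝ))

noncomputable def eigsAsc (M : Matrix (Fin n) (Fin n) ℝ) : Fin n → ℝ :=
  if h : M.IsHermitian then (h.eigenvalues ∘ Tuple.sort h.eigenvalues) else 0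

noncomputable def lamMax {n : ℕ} (M : Matrix (Fin n) (Fin n) ℝ) : ℝ :=
  ⨆ i, eigsAsc M i

noncomputable def volR {n : ℕ} (E : Finset (Finset (Fin n))) (S : Finset (Fin n)) : ℝ :=
  ∑ v ∈ S, (hdeg E v : ℝ)

noncomputable def bndR {n : ℕ} (E : Finset (Finset (Fin n))) (S : Finset (Fin n)) : ℝ :=
  ∑ u ∈ S, ∑ v ∈ Sᶜ, (codeg E u v : ℝ)

open Matrix

lemma adjMat_herm (E : Finset (Finset (Fin n))) : (adjMat E).IsHermitian := by
  ext u v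
  simp only [Matrix.conjTranspose_apply, adjMat, star_trivial]
  by_cases h : u = v
  · simp [h, eq_comm]
  · simp only [if_neg h, if_neg (Ne.symm h)]
    congr 1
    ext e
    simp [and_comm]

lemma lapMat_herm (E : Finset (Finset (Fin n))) : (lapMat E).IsHermitian :=
  (Matrix.isHermitian_diagonal _).sub (adjMat_herm E)

lemma normLap_herm (E : Finset (Finset (Fin n))) : (normLap E).IsHermitian := by
  have h := (Matrix.isHermitian_mul_mul_conjTranspose
    (Matrix.diagonal (fun v => (hdeg E v : ℝ) ^ (-(1/2) : ℝ))) (lapMat_herm E))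
  have hd := (Matrix.isHermitian_diagonal (fun v => (hdeg E v : ℝ) ^ (-(1/2) : ℝ))).eq
  rw [hd] at h
  exact h

lemma eig_le_lamMax {N : ℕ} {M : Matrix (Fin N) (Fin N) ℝ} (hM : M.IsHermitian) (i : Fin N) :
    hM.eigenvalues i ≤ lamMax M := by
  have h1 : hM.eigenvalues i = eigsAsc M ((Tuple.sort hM.eigenvalues)⁻¹ i) := by
    rw [eigsAsc, dif_pos hM]
    simp
  rw [h1, lamMax]
  exact le_ciSup (Set.Finite.bddAbove (Set.finite_range _)) _

lemma rayleigh_le {N : ℕ} {M : Matrix (Fin N) (Fin N) ℝ} (hM : M.IsHermitian) (x : Fin N → ℝ) :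
    x ⬝ᵥ (M *ᵥ x) ≤ lamMax M * (x ⬝ᵥ x) := by
  classical
  set U : Matrix (Fin N) (Fin N) ℝ := (hM.eigenvectorUnitary : Matrix (Fin N) (Fin N) ℝ) with hU
  set y : Fin N → ℝ := (star U) *ᵥ x with hy
  have hyx : y ⬝ᵥ y = x ⬝ᵥ x := by
    rw [hy, Matrix.dotProduct_mulVec]
    have : (star U *ᵥ x) ᵥ* star U = (star U)ᵀ *ᵥ (star U *ᵥ x) :=
      (Matrix.mulVec_transpose _ _).symm
    rw [this, Matrix.mulVec_mulVec]
    have hstar : (star U)ᵀ = U := by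
      have : star U = Uᴴ := rfl
      rw [this, Matrix.conjTranspose]
      ext i j
      simp
    rw [hstar, (Matrix.mem_unitaryGroup_iff).mp hM.eigenvectorUnitary.2, Matrix.one_mulVec]
  have hform : x ⬝ᵥ (M *ᵥ x) = ∑ i, hM.eigenvalues i * (y i)^2 := by
    conv_lhs => rw [hM.spectral_theorem, Unitary.conjStarAlgAut_apply]
    rw [← Matrix.mulVec_mulVec, ← Matrix.mulVec_mulVec, Matrix.dotProduct_mulVec]
    have h1 : x ᵥ* U = Uᵀ *ᵥ x := (Matrix.mulVec_transpose _ _).symm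
    have hstar : Uᵀ = star U := by
      have : star U = Uᴴ := rfl
      rw [this, Matrix.conjTranspose]
      ext i j
      simp
    rw [h1, hstar, ← hy]
    simp [dotProduct, Matrix.mulVec_diagonal, Function.comp]
    exact Finset.sum_congr rfl fun i _ => by ring
  rw [hform, ← hyx]
  have : lamMax M * (y ⬝ᵥ y) = ∑ i, lamMax M * (y i)^2 := by
    rw [dotProduct, Finset.mul_sum]
    exact Finset.sum_congr rfl fun i _ => by ring
  rw [this]
  exact Finset.sum_le_sum fun i _ =>
    mul_le_mul_of_nonneg_right (eig_le_lamMax hM i) (sq_nonneg _)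

lemma pair_sum (e : Finset (Fin n)) (g : Fin n → ℝ) (c : ℝ) :
    ∑ u : Fin n, ∑ v : Fin n, (if u ∈ e ∧ v ∈ e ∧ u ≠ v then g u * g v * c else 0)
      = ((∑ v ∈ e, g v)^2 - ∑ v ∈ e, (g v)^2) * c := by
  set h : Fin n → ℝ := fun v => if v ∈ e then g v else 0 with hh
  have hterm : ∀ u v : Fin n, (if u ∈ e ∧ v ∈ e ∧ u ≠ v then g u * g v * c else 0)
      = h u * h v * c - (if u = v then h u * h v * c else 0) := by
    intro u v
    by_cases huv : u = v
    · subst huv; by_cases hu : u ∈ e <;> simp [hh, hu]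
    · by_cases hu : u ∈ e <;> by_cases hv : v ∈ e <;> simp [hh, hu, hv, huv]
  simp only [hterm, Finset.sum_sub_distrib]
  have h2 : ∀ u : Fin n, ∑ v : Fin n, (if u = v then h u * h v * c else 0) = h u * h u * c := by
    intro u; simp
  simp only [h2]
  have h3 : ∑ v : Fin n, h v = ∑ v ∈ e, g v := by
    simp only [hh]; rw [Finset.sum_ite_mem, Finset.univ_inter]
  have h4 : ∑ v : Fin n, h v * h v = ∑ v ∈ e, (g v)^2 := by
    have : ∀ v : Fin n, h v * h v = if v ∈ e then (g v)^2 else 0 := by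
      intro v; by_cases hv : v ∈ e <;> simp [hh, hv, sq]
    simp only [this]; rw [Finset.sum_ite_mem, Finset.univ_inter]
  have h5 : ∑ u : Fin n, ∑ v : Fin n, h u * h v * c
      = (∑ u : Fin n, h u) * (∑ v : Fin n, h v) * c := by
    rw [Finset.sum_mul, Finset.sum_mul]
    exact Finset.sum_congr rfl fun u _ => by simp [Finset.mul_sum, Finset.sum_mul, mul_assoc]
  have h6 : ∑ u : Fin n, h u * h u * c = (∑ v : Fin n, h v * h v) * c := by
    rw [Finset.sum_mul]
  rw [h5, h6, h3, h4]
  ring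

lemma deg_sum (E : Finset (Finset (Fin n))) (f : Fin n → ℝ) :
    ∑ v : Fin n, (hdeg E v : ℝ) * f v = ∑ e ∈ E, ∑ v ∈ e, f v := by
  have h1 : ∀ v : Fin n, (hdeg E v : ℝ) * f v = ∑ e ∈ E, if v ∈ e then f v else 0 := by
    intro v
    rw [hdeg, Finset.card_filter, Nat.cast_sum, Finset.sum_mul]
    exact Finset.sum_congr rfl fun e _ => by by_cases hv : v ∈ e <;> simp [hv]
  simp only [h1]
  rw [Finset.sum_comm]
  exact Finset.sum_congr rfl fun e _ => by rw [Finset.sum_ite_mem, Finset.univ_inter]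

lemma adj_form {k : ℕ} (E : Finset (Finset (Fin n))) (hunif : ∀ e ∈ E, e.card = k)
    (g : Fin n → ℝ) :
    g ⬝ᵥ (adjMat E *ᵥ g)
      = ∑ e ∈ E, (((∑ v ∈ e, g v)^2 - ∑ v ∈ e, (g v)^2) * (1 / ((k:ℝ) - 1))) := by
  have key : ∀ u v : Fin n,
      g u * ((if u = v then 0
        else ∑ e ∈ E.filter (fun e => u ∈ e ∧ v ∈ e), (1 : ℝ) / ((e.card : ℝ) - 1)) * g v)
      = ∑ e ∈ E, (if u ∈ e ∧ v ∈ e ∧ u ≠ v then g u * g v * (1 / ((k:ℝ) - 1)) else 0) := by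
    intro u v
    by_cases huv : u = v
    · subst huv
      simp
    · rw [if_neg huv, Finset.sum_filter]
      rw [Finset.sum_mul, Finset.mul_sum]
      refine Finset.sum_congr rfl fun e he => ?_
      by_cases hm : u ∈ e ∧ v ∈ e
      · rw [if_pos hm, if_pos ⟨hm.1, hm.2, huv⟩, hunif e he]
        ring
      · have : ¬ (u ∈ e ∧ v ∈ e ∧ u ≠ v) := fun ⟨h1', h2', _⟩ => hm ⟨h1', h2'⟩
        rw [if_neg hm, if_neg this]
        ring
  have lhs_eq : g ⬝ᵥ (adjMat E *ᵥ g)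
      = ∑ u : Fin n, ∑ v : Fin n, g u * (adjMat E u v * g v) := by
    simp [dotProduct, Matrix.mulVec, Finset.mul_sum]
  rw [lhs_eq]
  simp only [adjMat]
  simp only [key]
  have s1 : ∀ u : Fin n,
      (∑ v : Fin n, ∑ e ∈ E, (if u ∈ e ∧ v ∈ e ∧ u ≠ v then g u * g v * (1/((k:ℝ)-1)) else 0))
      = ∑ e ∈ E, ∑ v : Fin n, (if u ∈ e ∧ v ∈ e ∧ u ≠ v then g u * g v * (1/((k:ℝ)-1)) else 0) :=
    fun u => Finset.sum_comm
  simp only [s1]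
  rw [Finset.sum_comm]
  exact Finset.sum_congr rfl fun e _ => pair_sum e g _

lemma two_val_sum (e : Finset (Fin n)) (v0 : Fin n) (a b : ℝ) :
    ∑ v ∈ e, (if v = v0 then a else b)
      = b * (e.card : ℝ) + (if v0 ∈ e then a - b else 0) := by
  have : ∀ v : Fin n, (if v = v0 then a else b) = b + (if v = v0 then a - b else 0) := by
    intro v; by_cases hv : v = v0 <;> simp [hv]
  simp only [this]
  rw [Finset.sum_add_distrib, Finset.sum_const, Finset.sum_ite_eq' e v0 (fun _ => a - b)]
  simp [mul_comm]

lemma lap_form_eval {k : ℕ} (hk : 2 ≤ k) (E : Finset (Finset (Fin n)))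
    (hunif : ∀ e ∈ E, e.card = k) (v0 : Fin n) (t s : ℝ) :
    (fun v => if v = v0 then t else s) ⬝ᵥ (lapMat E *ᵥ (fun v => if v = v0 then t else s))
      = (hdeg E v0 : ℝ) * (t - s)^2 := by
  set g : Fin n → ℝ := fun v => if v = v0 then t else s with hg
  have hk1 : ((k:ℝ) - 1) ≠ 0 := by
    have : (2:ℝ) ≤ (k:ℝ) := by exact_mod_cast hk
    linarith
  have hdot : g ⬝ᵥ (lapMat E *ᵥ g)
      = g ⬝ᵥ (Matrix.diagonal (fun v => (hdeg E v : ℝ)) *ᵥ g) - g ⬝ᵥ (adjMat E *ᵥ g) := by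
    rw [lapMat, Matrix.sub_mulVec, dotProduct_sub]
  have hdiag : g ⬝ᵥ (Matrix.diagonal (fun v => (hdeg E v : ℝ)) *ᵥ g)
      = ∑ e ∈ E, ∑ v ∈ e, (g v)^2 := by
    rw [← deg_sum E (fun v => (g v)^2)]
    simp [dotProduct, Matrix.mulVec_diagonal, sq]
    exact Finset.sum_congr rfl fun v _ => by ring
  rw [hdot, hdiag, adj_form E hunif g, ← Finset.sum_sub_distrib]
  have hper : ∀ e ∈ E, (∑ v ∈ e, (g v)^2
      - ((∑ v ∈ e, g v)^2 - ∑ v ∈ e, (g v)^2) * (1 / ((k:ℝ) - 1)))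
      = if v0 ∈ e then (t - s)^2 else 0 := by
    intro e he
    have hsq : ∀ v : Fin n, (g v)^2 = if v = v0 then t^2 else s^2 := by
      intro v; by_cases hv : v = v0 <;> simp [hg, hv]
    have h1 : ∑ v ∈ e, g v = s * (k:ℝ) + (if v0 ∈ e then t - s else 0) := by
      rw [hg, two_val_sum, hunif e he]
    have h2 : ∑ v ∈ e, (g v)^2 = s^2 * (k:ℝ) + (if v0 ∈ e then t^2 - s^2 else 0) := by
      simp only [hsq]; rw [two_val_sum, hunif e he]
    rw [h1, h2]
    by_cases hv0 : v0 ∈ e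
    · simp only [if_pos hv0]
      field_simp
      ring
    · simp only [if_neg hv0]
      field_simp
      ring
  rw [Finset.sum_congr rfl hper, Finset.sum_ite, Finset.sum_const, Finset.sum_const_zero,
    add_zero, hdeg]
  simp [mul_comm]

lemma rpow_cancel {d : ℝ} (hd : 0 < d) : d ^ (-(1/2) : ℝ) * d ^ ((1/2) : ℝ) = 1 := by
  rw [← Real.rpow_add hd]
  norm_num

lemma norm_reduce (E : Finset (Finset (Fin n))) (hiso : ∀ v : Fin n, 0 < hdeg E v)
    (g : Fin n → ℝ) :
    (fun v => ((hdeg E v : ℝ) ^ ((1/2) : ℝ)) * g v) ⬝ᵥ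
      (normLap E *ᵥ (fun v => ((hdeg E v : ℝ) ^ ((1/2) : ℝ)) * g v))
      = g ⬝ᵥ (lapMat E *ᵥ g) := by
  set x : Fin n → ℝ := fun v => ((hdeg E v : ℝ) ^ ((1/2) : ℝ)) * g v with hx
  have hdpos : ∀ v : Fin n, (0:ℝ) < (hdeg E v : ℝ) := fun v => by exact_mod_cast hiso v
  set Dm := Matrix.diagonal (fun v : Fin n => (hdeg E v : ℝ) ^ (-(1/2) : ℝ)) with hDm
  have hsplit : normLap E *ᵥ x = Dm *ᵥ (lapMat E *ᵥ (Dm *ᵥ x)) := by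
    rw [normLap, Matrix.mulVec_mulVec, Matrix.mulVec_mulVec]
  have hDx : Dm *ᵥ x = g := by
    funext v
    rw [hDm, Matrix.mulVec_diagonal, hx]
    rw [← mul_assoc, rpow_cancel (hdpos v), one_mul]
  have hdotD : ∀ w : Fin n → ℝ, x ⬝ᵥ (Dm *ᵥ w) = g ⬝ᵥ w := by
    intro w
    simp only [dotProduct, hDm, Matrix.mulVec_diagonal, hx]
    refine Finset.sum_congr rfl fun v _ => ?_
    rw [show (hdeg E v : ℝ) ^ ((1/2) : ℝ) * g v * ((hdeg E v : ℝ) ^ (-(1/2) : ℝ) * w v)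
      = ((hdeg E v : ℝ) ^ (-(1/2) : ℝ) * (hdeg E v : ℝ) ^ ((1/2) : ℝ)) * (g v * w v) by ring,
      rpow_cancel (hdpos v), one_mul]
  rw [hsplit, hDx, hdotD]

lemma denom_eval {k m : ℕ} (E : Finset (Finset (Fin n))) (hunif : ∀ e ∈ E, e.card = k)
    (hm : E.card = m) (v0 : Fin n) (t s : ℝ) :
    (fun v => ((hdeg E v : ℝ) ^ ((1/2) : ℝ)) * (if v = v0 then t else s)) ⬝ᵥ
      (fun v => ((hdeg E v : ℝ) ^ ((1/2) : ℝ)) * (if v = v0 then t else s))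
      = (k:ℝ) * (m:ℝ) * s^2 + (hdeg E v0 : ℝ) * (t^2 - s^2) := by
  set g : Fin n → ℝ := fun v => if v = v0 then t else s with hg
  have hdsq : ∀ v : Fin n, ((hdeg E v : ℝ) ^ ((1/2) : ℝ) * g v) *
      ((hdeg E v : ℝ) ^ ((1/2) : ℝ) * g v) = (hdeg E v : ℝ) * (g v)^2 := by
    intro v
    rw [show ((hdeg E v : ℝ) ^ ((1/2) : ℝ) * g v) * ((hdeg E v : ℝ) ^ ((1/2) : ℝ) * g v)
      = ((hdeg E v : ℝ) ^ ((1/2) : ℝ) * (hdeg E v : ℝ) ^ ((1/2) : ℝ)) * (g v)^2 by ring,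
      ← Real.rpow_add' (Nat.cast_nonneg _) (by norm_num)]
    norm_num
  simp only [dotProduct]
  change ∑ v, ((hdeg E v : ℝ) ^ ((1/2) : ℝ) * g v) * ((hdeg E v : ℝ) ^ ((1/2) : ℝ) * g v) = _
  simp only [hdsq]
  rw [deg_sum E (fun v => (g v)^2)]
  have hsq : ∀ v : Fin n, (g v)^2 = if v = v0 then t^2 else s^2 := by
    intro v; by_cases hv : v = v0 <;> simp [hg, hv]
  have hper : ∀ e ∈ E, ∑ v ∈ e, (g v)^2
      = s^2 * (k:ℝ) + (if v0 ∈ e then t^2 - s^2 else 0) := by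
    intro e he
    simp only [hsq]; rw [two_val_sum, hunif e he]
  rw [Finset.sum_congr rfl hper, Finset.sum_add_distrib, Finset.sum_const, Finset.sum_ite,
    Finset.sum_const, Finset.sum_const_zero, add_zero, hm, hdeg]
  simp
  ring

theorem stmt8 (n k m Δ : ℕ) (hn : 2 ≤ n) (hk : 2 ≤ k) (E : Finset (Finset (Fin n)))
    (hunif : ∀ e ∈ E, e.card = k) (hm : E.card = m) (hiso : ∀ v : Fin n, 0 < hdeg E v)
    (hΔ : Δ = Finset.univ.sup (hdeg E)) :
    (k : ℝ) * (m : ℝ) / ((k : ℝ) * (m : ℝ) - (Δ : ℝ)) ≤ lamMax (normLap E) := by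
  have hne : (Finset.univ : Finset (Fin n)).Nonempty := by
    have : 0 < n := by omega
    exact ⟨⟨0, this⟩, Finset.mem_univ _⟩
  obtain ⟨v0, -, hv0⟩ := Finset.exists_mem_eq_sup (Finset.univ : Finset (Fin n)) hne (hdeg E)
  have hΔv : Δ = hdeg E v0 := by rw [hΔ, hv0]
  set L : ℝ := lamMax (normLap E) with hL
  set D : ℝ := (hdeg E v0 : ℝ) with hD
  set KM : ℝ := (k:ℝ) * (m:ℝ) with hKM
  set t : ℝ := KM - D with ht
  set s : ℝ := -D with hs
  set g : Fin n → ℝ := fun v => if v = v0 then t else s with hg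
  set x : Fin n → ℝ := fun v => ((hdeg E v : ℝ) ^ ((1/2) : ℝ)) * g v with hx
  -- numeric facts
  have hD1 : (1:ℝ) ≤ D := by
    have := hiso v0
    rw [hD]
    exact_mod_cast this
  have hDm : D ≤ (m:ℝ) := by
    rw [hD, ← hm]
    exact_mod_cast Finset.card_filter_le E _
  have hm1 : (1:ℝ) ≤ (m:ℝ) := by
    have : E.Nonempty := by
      rcases Finset.card_pos.mp (hiso v0) with ⟨e, he⟩
      exact ⟨e, (Finset.mem_filter.mp he).1⟩
    have : 1 ≤ m := hm ▸ Finset.card_pos.mpr this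
    exact_mod_cast this
  have hk2 : (2:ℝ) ≤ (k:ℝ) := by exact_mod_cast hk
  have hKMD : (1:ℝ) ≤ KM - D := by nlinarith
  have hKM0 : (0:ℝ) < KM := by nlinarith
  have hD0 : (0:ℝ) < D := by linarith
  -- Rayleigh bound
  have hray := rayleigh_le (normLap_herm E) x
  rw [hx] at hray
  rw [norm_reduce E hiso g] at hray
  rw [hg] at hray
  rw [lap_form_eval hk E hunif v0 t s] at hray
  rw [denom_eval E hunif hm v0 t s] at hray
  rw [← hD] at hray
  -- conclude
  have hgoal : KM / (KM - D) ≤ L := by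
    rw [div_le_iff₀ (by linarith)]
    have hts : t - s = KM := by rw [ht, hs]; ring
    rw [hts, ht, hs, ← hKM, ← hL] at hray
    have key : (D * KM) * KM ≤ (D * KM) * (L * (KM - D)) := by nlinarith [hray]
    exact le_of_mul_le_mul_left key (mul_pos hD0 hKM0)
  have : ((Δ:ℝ)) = D := by rw [hD, hΔv]
  rw [this]
  exact hgoal
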